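/- There is no F₂-algebra homomorphism s from F₂[x, y, z]/(x⁴, y², z², x² + xy + z) to F₂[y, z]/(y², z²) sending the class of y to the class of y and the class of z to the class of z. (This is the algebraic core of the theorem that for a finite-dimensional quadrangle with parameters (1, 1) and orientable point space the bundle F → L admits no continuous section: the Z/2-cohomology ring of the flag space is F₂[x₁, y₁, y₂]/(x₁⁴, y₁², y₂², x₁² + y₂ + x₁y₁), that of the line space is F₂[y₁, y₂]/(y₁², y₂²), and a section would induce a ring retraction fixing y₁ and y₂.) -/

import Mathlib

set_option synthInstance.maxHeartbeats 1000000
set_option maxHeartbeats 1000000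

open MvPolynomial DualNumber

noncomputable def noSectionAux :
    MvPolynomial (Fin 2) (ZMod 2) →ₐ[ZMod 2] DualNumber (DualNumber (ZMod 2)) :=
  aeval ![(eps : DualNumber (DualNumber (ZMod 2))),
    TrivSqZeroExt.inl (eps : DualNumber (ZMod 2))]

lemma noSectionAux_ideal :
    ∀ a ∈ Ideal.span {(MvPolynomial.X 0 : MvPolynomial (Fin 2) (ZMod 2)) ^ 2,
      MvPolynomial.X 1 ^ 2}, noSectionAux a = 0 := by
  intro a ha
  have h : Ideal.span {(MvPolynomial.X 0 : MvPolynomial (Fin 2) (ZMod 2)) ^ 2,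
      MvPolynomial.X 1 ^ 2} ≤ RingHom.ker noSectionAux.toRingHom := by
    rw [Ideal.span_le]
    rintro p (rfl | rfl) <;>
      simp [noSectionAux, RingHom.mem_ker, sq, ← TrivSqZeroExt.inl_mul]
  exact h ha

noncomputable def noSectionLift :
    (MvPolynomial (Fin 2) (ZMod 2) ⧸
      Ideal.span {(MvPolynomial.X 0 : MvPolynomial (Fin 2) (ZMod 2)) ^ 2,
        MvPolynomial.X 1 ^ 2}) →ₐ[ZMod 2] DualNumber (DualNumber (ZMod 2)) :=
  Ideal.Quotient.liftₐ _ noSectionAux noSectionAux_ideal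

/-- There is no `F₂`-algebra homomorphism from `F₂[x, y, z]/(x⁴, y², z², x² + xy + z)`
to `F₂[y, z]/(y², z²)` sending the class of `y` to the class of `y` and the class of
`z` to the class of `z`. -/
theorem no_section_one_one_quadrangle :
    ¬ ∃ s : (MvPolynomial (Fin 3) (ZMod 2) ⧸
        Ideal.span {(MvPolynomial.X 0 : MvPolynomial (Fin 3) (ZMod 2)) ^ 4,
          MvPolynomial.X 1 ^ 2, MvPolynomial.X 2 ^ 2,
          MvPolynomial.X 0 ^ 2 + MvPolynomial.X 0 * MvPolynomial.X 1 +
            MvPolynomial.X 2}) →ₐ[ZMod 2]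
        (MvPolynomial (Fin 2) (ZMod 2) ⧸
          Ideal.span {(MvPolynomial.X 0 : MvPolynomial (Fin 2) (ZMod 2)) ^ 2,
            MvPolynomial.X 1 ^ 2}),
      s (Ideal.Quotient.mk _ (MvPolynomial.X 1)) =
          Ideal.Quotient.mk _ (MvPolynomial.X 0) ∧
        s (Ideal.Quotient.mk _ (MvPolynomial.X 2)) =
          Ideal.Quotient.mk _ (MvPolynomial.X 1) := by
  rintro ⟨s, hy, hz⟩
  have hmem : (MvPolynomial.X 0 ^ 2 + MvPolynomial.X 0 * MvPolynomial.X 1 +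
      MvPolynomial.X 2 : MvPolynomial (Fin 3) (ZMod 2)) ∈
      Ideal.span {(MvPolynomial.X 0 : MvPolynomial (Fin 3) (ZMod 2)) ^ 4,
        MvPolynomial.X 1 ^ 2, MvPolynomial.X 2 ^ 2,
        MvPolynomial.X 0 ^ 2 + MvPolynomial.X 0 * MvPolynomial.X 1 +
          MvPolynomial.X 2} := by
    apply Ideal.subset_span; simp
  have h0 : (Ideal.Quotient.mk _ (MvPolynomial.X 0 ^ 2 +
      MvPolynomial.X 0 * MvPolynomial.X 1 + MvPolynomial.X 2 :
      MvPolynomial (Fin 3) (ZMod 2))) = 0 :=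
    (Ideal.Quotient.eq_zero_iff_mem).mpr hmem
  set t := s (Ideal.Quotient.mk _ (MvPolynomial.X 0 : MvPolynomial (Fin 3) (ZMod 2)))
  have h1 : t ^ 2 + t * Ideal.Quotient.mk _ (MvPolynomial.X 0) +
      Ideal.Quotient.mk _ (MvPolynomial.X 1) = 0 := by
    have := congrArg s h0
    simpa [map_add, map_mul, map_pow, hy, hz, t] using this
  have h2 := congrArg noSectionLift h1
  set b := noSectionLift t
  have hY : noSectionLift (Ideal.Quotient.mk _
      (MvPolynomial.X 0 : MvPolynomial (Fin 2) (ZMod 2))) = eps := by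
    change noSectionAux (MvPolynomial.X 0) = _
    simp [noSectionAux]
  have hZ : noSectionLift (Ideal.Quotient.mk _
      (MvPolynomial.X 1 : MvPolynomial (Fin 2) (ZMod 2))) =
      TrivSqZeroExt.inl (eps : DualNumber (ZMod 2)) := by
    change noSectionAux (MvPolynomial.X 1) = _
    simp [noSectionAux]
  have h3 : b ^ 2 + b * eps + TrivSqZeroExt.inl (eps : DualNumber (ZMod 2)) = 0 := by
    simpa [map_add, map_mul, map_pow, hY, hZ, b] using h2
  have h4 := congrArg (fun w => TrivSqZeroExt.snd (TrivSqZeroExt.fst w)) h3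
  simp [pow_two] at h4
  rw [mul_comm, CharTwo.add_self_eq_zero] at h4
  simp at h4
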